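/- Let λ ∈ ℝ^n be nonzero with λ_1 ≥ λ_2 ≥ … ≥ λ_n ≥ 0, let τ > 0 and b ∈ ℝ^n, let ψ(y) = ⟨Π_C(yλ + b), λ⟩ − τ, and let y* be the unique minimizer over ℝ of φ(y) = ½‖Π_C(yλ + b)‖² − yτ − ½‖b‖². Then there exists ε > 0 such that for every y ∈ ℝ with |y − y*| < ε and every M ∈ M(y): M > 0 and y − ψ(y)/M = y*. In particular, one exact semismooth Newton step from any point sufficiently close to y* lands exactly on y*. -/

import Mathlib

open Matrix

/-- The matrix `B` with `(Bx)_i = x_i − x_{i+1}` for `1 ≤ i ≤ n−1` and `(Bx)_n = x_n`. -/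
def Bmat (n : ℕ) : Matrix (Fin n) (Fin n) ℝ :=
  Matrix.of fun i j => if j = i then 1 else if (j : ℕ) = (i : ℕ) + 1 then -1 else 0

/-- `B_Γ`, the submatrix of `B` formed by the rows indexed by `Γ`. -/
def subRows {n : ℕ} (Γ : Finset (Fin n)) : Matrix {i // i ∈ Γ} (Fin n) ℝ :=
  Matrix.of fun i j => Bmat n i.1 j

/-- `H = I_n − B_Γᵀ (B_Γ B_Γᵀ)⁻¹ B_Γ`, the orthogonal projection onto the null space of
`B_Γ` (equal to `I_n` when `Γ = ∅`). -/
noncomputable def Hmat {n : ℕ} (Γ : Finset (Fin n)) : Matrix (Fin n) (Fin n) ℝ :=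
  1 - (subRows Γ)ᵀ * (subRows Γ * (subRows Γ)ᵀ)⁻¹ * subRows Γ

/-- The monotone nonnegative cone `C = {x : x₁ ≥ x₂ ≥ … ≥ xₙ ≥ 0}`. -/
def coneC (n : ℕ) : Set (Fin n → ℝ) :=
  {x | (∀ i j : Fin n, i ≤ j → x j ≤ x i) ∧ ∀ i, 0 ≤ x i}

/-- `Pc` is the Euclidean (metric) projection onto the cone `C`:
`Pc d` minimizes `½‖x − d‖²` over `x ∈ C`. -/
def IsProjC {n : ℕ} (Pc : (Fin n → ℝ) → Fin n → ℝ) : Prop :=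
  ∀ d : Fin n → ℝ, Pc d ∈ coneC n ∧
    ∀ x ∈ coneC n, (1/2) * ∑ i, (Pc d i - d i)^2 ≤ (1/2) * ∑ i, (x i - d i)^2

/-- `z(d) = (Bᵀ)⁻¹(d − Π_C(d))`. -/
noncomputable def zdual {n : ℕ} (Pc : (Fin n → ℝ) → Fin n → ℝ) (d : Fin n → ℝ) :
    Fin n → ℝ :=
  Matrix.mulVec ((Bmat n)ᵀ)⁻¹ (d - Pc d)

/-- `K(d) = {Γ : Supp(z(d)) ⊆ Γ ⊆ I(Π_C(d))}`. -/
def Kset {n : ℕ} (Pc : (Fin n → ℝ) → Fin n → ℝ) (d : Fin n → ℝ) :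
    Set (Finset (Fin n)) :=
  {Γ | (∀ i, zdual Pc d i ≠ 0 → i ∈ Γ) ∧ ∀ i ∈ Γ, (Bmat n).mulVec (Pc d) i = 0}

/-- `H(d) = {I_n − B_Γᵀ(B_Γ B_Γᵀ)⁻¹ B_Γ : Γ ∈ K(d)}`, the HS-Jacobian of `Π_C` at `d`. -/
def Hset {n : ℕ} (Pc : (Fin n → ℝ) → Fin n → ℝ) (d : Fin n → ℝ) :
    Set (Matrix (Fin n) (Fin n) ℝ) :=
  {H | ∃ Γ ∈ Kset Pc d, H = Hmat Γ}

/-- `M(y) = {λᵀHλ : H ∈ H(yλ + b)}`. -/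
def Mset {n : ℕ} (Pc : (Fin n → ℝ) → Fin n → ℝ) (lam b : Fin n → ℝ) (y : ℝ) : Set ℝ :=
  {m | ∃ H ∈ Hset Pc (y • lam + b), m = dotProduct lam (H.mulVec lam)}

/-- The dual objective `φ(y) = ½‖Π_C(yλ + b)‖² − yτ − ½‖b‖²`. -/
noncomputable def phiFun {n : ℕ} (Pc : (Fin n → ℝ) → Fin n → ℝ) (lam b : Fin n → ℝ)
    (τ : ℝ) : ℝ → ℝ :=
  fun y => (1/2) * ∑ i, (Pc (y • lam + b) i)^2 - y * τ - (1/2) * ∑ i, (b i)^2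

/-- `ψ(y) = ⟨Π_C(yλ + b), λ⟩ − τ` (the derivative `φ′` of the dual objective). -/
noncomputable def psiFun {n : ℕ} (Pc : (Fin n → ℝ) → Fin n → ℝ) (lam b : Fin n → ℝ)
    (τ : ℝ) : ℝ → ℝ :=
  fun y => (∑ i, Pc (y • lam + b) i * lam i) - τ

/-- The Euclidean norm on `ℝⁿ`. -/
noncomputable def enorm {n : ℕ} (x : Fin n → ℝ) : ℝ :=
  Real.sqrt (∑ i, (x i)^2)


open Matrix

section Helpers
variable {n : ℕ}

lemma sum_expand' (f g : Fin n → ℝ) (t : ℝ) :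
    ∑ i, (f i + t * g i)^2
      = ∑ i, (f i)^2 + 2*t*(∑ i, f i * g i) + t^2 * ∑ i, (g i)^2 := by
  rw [Finset.mul_sum, Finset.mul_sum, ← Finset.sum_add_distrib, ← Finset.sum_add_distrib]
  exact Finset.sum_congr rfl fun i _ => by ring

lemma coneC_zero : (0 : Fin n → ℝ) ∈ coneC n := ⟨fun i j _ => le_rfl, fun i => le_rfl⟩

lemma coneC_smul {x : Fin n → ℝ} (hx : x ∈ coneC n) {t : ℝ} (ht : 0 ≤ t) :
    t • x ∈ coneC n :=
  ⟨fun i j hij => mul_le_mul_of_nonneg_left (hx.1 i j hij) ht,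
   fun i => mul_nonneg ht (hx.2 i)⟩

lemma coneC_segment {x y : Fin n → ℝ} (hx : x ∈ coneC n) (hy : y ∈ coneC n)
    {t : ℝ} (ht0 : 0 ≤ t) (ht1 : t ≤ 1) :
    (fun i => x i + t * (y i - x i)) ∈ coneC n := by
  constructor
  · intro i j hij
    have h1 := hx.1 i j hij
    have h2 := hy.1 i j hij
    dsimp only
    nlinarith
  · intro i
    have h1 := hx.2 i
    have h2 := hy.2 i
    dsimp only
    nlinarith

/-- Variational inequality for the projection. -/
lemma projVI {Pc : (Fin n → ℝ) → Fin n → ℝ} (hPc : IsProjC Pc) (d : Fin n → ℝ)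
    {x : Fin n → ℝ} (hx : x ∈ coneC n) :
    ∑ i, (d i - Pc d i) * (x i - Pc d i) ≤ 0 := by
  set c : ℝ := ∑ i, (d i - Pc d i) * (x i - Pc d i) with hc
  set s : ℝ := ∑ i, (x i - Pc d i)^2 with hs
  have hs0 : 0 ≤ s := Finset.sum_nonneg fun i _ => sq_nonneg _
  by_contra hcon
  push_neg at hcon
  have key : ∀ t : ℝ, 0 ≤ t → t ≤ 1 → 0 ≤ -(2*t*c) + t^2 * s := by
    intro t ht0 ht1
    have hxt := (hPc d).2 _ (coneC_segment (hPc d).1 hx ht0 ht1)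
    have hexp : ∑ i, ((Pc d i + t * (x i - Pc d i)) - d i)^2
        = ∑ i, (Pc d i - d i)^2 + 2*t*(∑ i, (Pc d i - d i) * (x i - Pc d i)) + t^2 * s := by
      have := sum_expand' (fun i => Pc d i - d i) (fun i => x i - Pc d i) t
      rw [← this]
      exact Finset.sum_congr rfl fun i _ => by ring
    rw [hexp] at hxt
    have hflip : ∑ i, (Pc d i - d i) * (x i - Pc d i) = -c := by
      rw [hc, ← Finset.sum_neg_distrib]
      exact Finset.sum_congr rfl fun i _ => by ring
    rw [hflip] at hxt
    nlinarith
  set t : ℝ := min 1 (c/(s+1)) with htdef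
  have hsc : 0 < c/(s+1) := div_pos hcon (by linarith)
  have ht0 : 0 < t := lt_min one_pos hsc
  have ht1 : t ≤ 1 := min_le_left _ _
  have hts : t ≤ c/(s+1) := min_le_right _ _
  have h := key t (le_of_lt ht0) ht1
  have h2 : t^2 * s ≤ t * c := by
    have hstep : t * (s/(s+1)) * c ≤ t * 1 * c := by
      apply mul_le_mul_of_nonneg_right _ (le_of_lt hcon)
      apply mul_le_mul_of_nonneg_left _ (le_of_lt ht0)
      rw [div_le_one (by linarith)]; linarith
    have hmm : t*t*s ≤ t*(c/(s+1))*s :=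
      mul_le_mul_of_nonneg_right (mul_le_mul_of_nonneg_left hts (le_of_lt ht0)) hs0
    calc t^2 * s = t*t*s := by ring
      _ ≤ t * (c/(s+1)) * s := hmm
      _ = t * (s/(s+1)) * c := by ring
      _ ≤ t * 1 * c := hstep
      _ = t * c := by ring
  nlinarith

/-- Orthogonality: ⟨d − Pd, Pd⟩ = 0. -/
lemma projOrth {Pc : (Fin n → ℝ) → Fin n → ℝ} (hPc : IsProjC Pc) (d : Fin n → ℝ) :
    ∑ i, (d i - Pc d i) * Pc d i = 0 := by
  have h0 := projVI hPc d (coneC_zero (n := n))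
  have h2 := projVI hPc d (coneC_smul (hPc d).1 (by norm_num : (0:ℝ) ≤ 2))
  simp only [Pi.zero_apply, Pi.smul_apply, smul_eq_mul] at h0 h2
  have e0 : ∑ i, (d i - Pc d i) * (0 - Pc d i) = -∑ i, (d i - Pc d i) * Pc d i := by
    rw [← Finset.sum_neg_distrib]; exact Finset.sum_congr rfl fun i _ => by ring
  have e2 : ∑ i, (d i - Pc d i) * (2 * Pc d i - Pc d i) = ∑ i, (d i - Pc d i) * Pc d i := by
    exact Finset.sum_congr rfl fun i _ => by ring
  rw [e0] at h0
  rw [e2] at h2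
  linarith

/-- The projection is 1-Lipschitz (squared form). -/
lemma projLip {Pc : (Fin n → ℝ) → Fin n → ℝ} (hPc : IsProjC Pc) (d d' : Fin n → ℝ) :
    ∑ i, (Pc d i - Pc d' i)^2 ≤ ∑ i, (d i - d' i)^2 := by
  have h1 := projVI hPc d (hPc d').1
  have h2 := projVI hPc d' (hPc d).1
  set S : ℝ := ∑ i, (Pc d i - Pc d' i)^2 with hS
  set c : ℝ := ∑ i, (d i - d' i) * (Pc d i - Pc d' i) with hc
  have hkey : S ≤ c := by
    have e : ∑ i, (d i - Pc d i) * (Pc d' i - Pc d i)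
           + ∑ i, (d' i - Pc d' i) * (Pc d i - Pc d' i)
           = S - c := by
      rw [hS, hc, ← Finset.sum_sub_distrib, ← Finset.sum_add_distrib]
      exact Finset.sum_congr rfl fun i _ => by ring
    linarith
  have hcs : c^2 ≤ (∑ i, (d i - d' i)^2) * S := by
    rw [hc, hS]
    exact Finset.sum_mul_sq_le_sq_mul_sq _ _ _
  have hS0 : 0 ≤ S := Finset.sum_nonneg fun i _ => sq_nonneg _
  have hT0 : (0:ℝ) ≤ ∑ i, (d i - d' i)^2 := Finset.sum_nonneg fun i _ => sq_nonneg _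
  rcases eq_or_lt_of_le hS0 with h | h
  · linarith
  · have hc0 : 0 ≤ c := le_trans hS0 hkey
    have : S * S ≤ c * c := mul_le_mul hkey hkey hS0 hc0
    nlinarith

end Helpers

section MatrixFacts
variable {n : ℕ}

lemma Bmat_blockTriangular : (Bmat n).BlockTriangular id := by
  intro i j hij
  have hlt : (j : ℕ) < (i : ℕ) := hij
  simp only [Bmat, Matrix.of_apply]
  rw [if_neg (by intro h; rw [h] at hlt; exact lt_irrefl _ hlt), if_neg (by omega)]

lemma Bmat_det : (Bmat n).det = 1 := by
  rw [Matrix.det_of_upperTriangular Bmat_blockTriangular]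
  apply Finset.prod_eq_one
  intro i _
  simp [Bmat]

lemma Bmat_isUnit_det : IsUnit (Bmat n).det := by rw [Bmat_det]; exact isUnit_one

lemma BmatT_isUnit_det : IsUnit ((Bmat n)ᵀ).det := by
  rw [Matrix.det_transpose]; exact Bmat_isUnit_det

lemma BT_mulVec_zdual (Pc : (Fin n → ℝ) → Fin n → ℝ) (d : Fin n → ℝ) :
    ((Bmat n)ᵀ).mulVec (zdual Pc d) = d - Pc d := by
  unfold zdual
  rw [Matrix.mulVec_mulVec, Matrix.mul_nonsing_inv _ BmatT_isUnit_det, Matrix.one_mulVec]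

/-- Extend a vector indexed by Γ to `Fin n` by zero. -/
def extendG (Γ : Finset (Fin n)) (v : {i // i ∈ Γ} → ℝ) : Fin n → ℝ :=
  fun j => if h : j ∈ Γ then v ⟨j, h⟩ else 0

lemma subRowsT_mulVec (Γ : Finset (Fin n)) (v : {i // i ∈ Γ} → ℝ) :
    (subRows Γ)ᵀ.mulVec v = ((Bmat n)ᵀ).mulVec (extendG Γ v) := by
  funext j
  simp only [Matrix.mulVec, dotProduct, Matrix.transpose_apply, subRows,
    Matrix.of_apply]
  have step1 : ∑ x : {i // i ∈ Γ}, Bmat n x.1 j * v x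
      = ∑ x : {i // i ∈ Γ}, Bmat n x.1 j * extendG Γ v x.1 :=
    Finset.sum_congr rfl fun x _ => by rw [extendG, dif_pos x.2]
  rw [step1, Finset.sum_coe_sort Γ (fun i => Bmat n i j * extendG Γ v i)]
  apply Finset.sum_subset (Finset.subset_univ Γ)
  intro i _ hi
  rw [extendG, dif_neg hi, mul_zero]

lemma gram_isUnit (Γ : Finset (Fin n)) : IsUnit (subRows Γ * (subRows Γ)ᵀ).det := by
  by_contra h
  have hdet : (subRows Γ * (subRows Γ)ᵀ).det = 0 := by
    by_contra h'
    exact h (isUnit_iff_ne_zero.mpr h')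
  obtain ⟨v, hv, hv0⟩ := (Matrix.exists_mulVec_eq_zero_iff).2 hdet
  have hA : (subRows Γ)ᵀ.mulVec v = 0 := by
    have h1 : v ⬝ᵥ (subRows Γ * (subRows Γ)ᵀ).mulVec v = 0 := by rw [hv0]; simp
    rw [← Matrix.mulVec_mulVec] at h1
    rw [Matrix.dotProduct_mulVec, ← Matrix.mulVec_transpose] at h1
    set u := (subRows Γ)ᵀ.mulVec v with hu
    have : ∑ i, (u i)^2 = 0 := by
      rw [← h1]; simp [dotProduct]; exact Finset.sum_congr rfl fun i _ => (sq (u i)).symm ▸ by ring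
    funext j
    have := (Finset.sum_eq_zero_iff_of_nonneg (fun i _ => sq_nonneg (u i))).1 this j (Finset.mem_univ j)
    exact pow_eq_zero_iff (two_ne_zero) |>.1 this
  rw [subRowsT_mulVec] at hA
  have hext : extendG Γ v = 0 := by
    have hinj : Function.Injective (((Bmat n)ᵀ).mulVec) :=
      Matrix.mulVec_injective_iff_isUnit.2 ((Matrix.isUnit_iff_isUnit_det _).2 BmatT_isUnit_det)
    have : ((Bmat n)ᵀ).mulVec (extendG Γ v) = ((Bmat n)ᵀ).mulVec 0 := by
      rw [hA, Matrix.mulVec_zero]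
    exact hinj this
  apply hv
  funext i
  have := congrFun hext i.1
  simpa [extendG, i.2] using this

end MatrixFacts

section HmatFacts
variable {n : ℕ}

lemma subRows_mulVec_eq_zero {Γ : Finset (Fin n)} {x : Fin n → ℝ}
    (hx : ∀ i ∈ Γ, (Bmat n).mulVec x i = 0) : (subRows Γ).mulVec x = 0 := by
  funext i
  have := hx i.1 i.2
  simpa [subRows, Matrix.mulVec, dotProduct, Bmat] using this

lemma Hmat_mul_self (Γ : Finset (Fin n)) : Hmat Γ * Hmat Γ = Hmat Γ := by
  set A := subRows Γ with hA
  set G := A * Aᵀ with hG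
  have hGu : IsUnit G.det := gram_isUnit Γ
  set X := Aᵀ * G⁻¹ * A with hX
  have key : X * X = X := by
    rw [hX]
    simp only [Matrix.mul_assoc]
    rw [← Matrix.mul_assoc A Aᵀ, ← hG, ← Matrix.mul_assoc G⁻¹ G,
      Matrix.nonsing_inv_mul _ hGu, Matrix.one_mul]
  have expand : (1 - X) * (1 - X) = 1 - X - X + X * X := by noncomm_ring
  show (1 - X) * (1 - X) = 1 - X
  rw [expand, key]
  abel

lemma Hmat_transpose (Γ : Finset (Fin n)) : (Hmat Γ)ᵀ = Hmat Γ := by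
  have hGT : (subRows Γ * (subRows Γ)ᵀ)ᵀ = subRows Γ * (subRows Γ)ᵀ := by
    rw [Matrix.transpose_mul, Matrix.transpose_transpose]
  rw [Hmat, Matrix.transpose_sub, Matrix.transpose_one, Matrix.transpose_mul,
    Matrix.transpose_mul, Matrix.transpose_transpose, Matrix.transpose_nonsing_inv, hGT]
  simp only [Matrix.mul_assoc]

lemma Hmat_mulVec_eq_proj {Pc : (Fin n → ℝ) → Fin n → ℝ} {d : Fin n → ℝ}
    {Γ : Finset (Fin n)} (hΓ : Γ ∈ Kset Pc d) :
    (Hmat Γ).mulVec d = Pc d := by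
  set A := subRows Γ with hA
  set G := A * Aᵀ with hG
  have hGu : IsUnit G.det := gram_isUnit Γ
  set z := zdual Pc d with hz
  set zG : {i // i ∈ Γ} → ℝ := fun i => z i.1 with hzG
  have hext : extendG Γ zG = z := by
    funext j
    by_cases h : j ∈ Γ
    · simp [extendG, h, hzG]
    · have hz0 : z j = 0 := by
        by_contra hne
        exact h (hΓ.1 j hne)
      simp [extendG, h, hz0]
  have hBTz : ((Bmat n)ᵀ).mulVec z = d - Pc d := BT_mulVec_zdual Pc d
  have hAz : Aᵀ.mulVec zG = d - Pc d := by
    rw [hA, subRowsT_mulVec, hext, hBTz]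
  have hAP : A.mulVec (Pc d) = 0 := subRows_mulVec_eq_zero hΓ.2
  have hAd : A.mulVec d = G.mulVec zG := by
    have : A.mulVec d = A.mulVec (Pc d) + A.mulVec (d - Pc d) := by
      rw [← Matrix.mulVec_add]
      congr 1
      funext i; simp
    rw [this, hAP, ← hAz, Matrix.mulVec_mulVec, ← hG]
    simp
  have hGinv : G⁻¹.mulVec (A.mulVec d) = zG := by
    rw [hAd, Matrix.mulVec_mulVec, Matrix.nonsing_inv_mul _ hGu, Matrix.one_mulVec]
  show (1 - Aᵀ * G⁻¹ * A).mulVec d = Pc d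
  rw [Matrix.sub_mulVec, Matrix.one_mulVec, Matrix.mul_assoc, ← Matrix.mulVec_mulVec,
    ← Matrix.mulVec_mulVec, hGinv, hAz]
  funext i; simp

lemma Hmat_dot_self (Γ : Finset (Fin n)) (lam : Fin n → ℝ) :
    dotProduct lam ((Hmat Γ).mulVec lam) = ∑ i, ((Hmat Γ).mulVec lam i)^2 := by
  set H := Hmat Γ with hH
  set u := H.mulVec lam with hu
  have h1 : u ⬝ᵥ u = lam ⬝ᵥ u := by
    rw [hu, Matrix.dotProduct_mulVec, ← Matrix.mulVec_transpose, Hmat_transpose, ← hH,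
      Matrix.mulVec_mulVec, Hmat_mul_self, ← hH, ← hu, dotProduct_comm]
  have h2 : u ⬝ᵥ u = ∑ i, (u i)^2 := by
    simp [dotProduct, sq]
  rw [← h1, h2]

lemma Hmat_mulVec_zero_dot {Γ : Finset (Fin n)} {lam x : Fin n → ℝ}
    (h0 : (Hmat Γ).mulVec lam = 0) (hx : ∀ i ∈ Γ, (Bmat n).mulVec x i = 0) :
    ∑ i, x i * lam i = 0 := by
  set A := subRows Γ with hA
  set G := A * Aᵀ with hG
  set w : {i // i ∈ Γ} → ℝ := G⁻¹.mulVec (A.mulVec lam) with hw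
  have hlam : lam = Aᵀ.mulVec w := by
    have h1 : (1 - Aᵀ * G⁻¹ * A).mulVec lam = 0 := h0
    rw [Matrix.sub_mulVec, Matrix.one_mulVec, sub_eq_zero] at h1
    rw [h1, hw, Matrix.mul_assoc, ← Matrix.mulVec_mulVec, ← Matrix.mulVec_mulVec]
  have hAx : A.mulVec x = 0 := subRows_mulVec_eq_zero hx
  have : x ⬝ᵥ lam = 0 := by
    rw [hlam, dotProduct_comm, Matrix.mulVec_transpose,
      ← Matrix.dotProduct_mulVec, hAx, dotProduct_zero]
  simpa [dotProduct] using this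

end HmatFacts

section Analytic
variable {n : ℕ} {Pc : (Fin n → ℝ) → Fin n → ℝ}

lemma sum_sq_sub (f g : Fin n → ℝ) :
    ∑ i, (f i - g i)^2 = ∑ i, (f i)^2 - 2*(∑ i, f i * g i) + ∑ i, (g i)^2 := by
  have := sum_expand' f g (-1)
  rw [show ∑ i, (f i + (-1) * g i)^2 = ∑ i, (f i - g i)^2 from
    Finset.sum_congr rfl fun i _ => by ring] at this
  rw [this]; ring

lemma projCoordLip (hPc : IsProjC Pc) (lam b : Fin n → ℝ) (j : Fin n) (y y' : ℝ) :
    |Pc (y • lam + b) j - Pc (y' • lam + b) j| ≤ |y - y'| * Real.sqrt (∑ i, (lam i)^2) := by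
  have h1 : (Pc (y • lam + b) j - Pc (y' • lam + b) j)^2
      ≤ ∑ i, (Pc (y • lam + b) i - Pc (y' • lam + b) i)^2 :=
    Finset.single_le_sum (f := fun i => (Pc (y • lam + b) i - Pc (y' • lam + b) i)^2)
      (fun i _ => sq_nonneg _) (Finset.mem_univ j)
  have h2 := projLip hPc (y • lam + b) (y' • lam + b)
  have h3 : ∑ i, ((y • lam + b) i - (y' • lam + b) i)^2 = (y - y')^2 * ∑ i, (lam i)^2 := by
    rw [Finset.mul_sum]
    exact Finset.sum_congr rfl fun i _ => by
      simp only [Pi.add_apply, Pi.smul_apply, smul_eq_mul]; ring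
  have h4 : (Pc (y • lam + b) j - Pc (y' • lam + b) j)^2 ≤ (y - y')^2 * ∑ i, (lam i)^2 := by
    rw [← h3]; exact le_trans h1 h2
  calc |Pc (y • lam + b) j - Pc (y' • lam + b) j|
      = Real.sqrt ((Pc (y • lam + b) j - Pc (y' • lam + b) j)^2) := (Real.sqrt_sq_eq_abs _).symm
    _ ≤ Real.sqrt ((y - y')^2 * ∑ i, (lam i)^2) := Real.sqrt_le_sqrt h4
    _ = |y - y'| * Real.sqrt (∑ i, (lam i)^2) := by
        rw [Real.sqrt_mul (sq_nonneg _), Real.sqrt_sq_eq_abs]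

lemma projCoordCont (hPc : IsProjC Pc) (lam b : Fin n → ℝ) (j : Fin n) :
    Continuous fun y : ℝ => Pc (y • lam + b) j := by
  set L := Real.sqrt (∑ i, (lam i)^2) with hL
  have hL0 : 0 ≤ L := Real.sqrt_nonneg _
  apply LipschitzWith.continuous (K := Real.toNNReal L)
  apply LipschitzWith.of_dist_le_mul
  intro y y'
  rw [Real.dist_eq, Real.dist_eq, Real.coe_toNNReal L hL0]
  rw [mul_comm]
  exact projCoordLip hPc lam b j y y'

end Analytic

section Analytic2
variable {n : ℕ} {Pc : (Fin n → ℝ) → Fin n → ℝ}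

lemma zdualCoordCont (hPc : IsProjC Pc) (lam b : Fin n → ℝ) (i : Fin n) :
    Continuous fun y : ℝ => zdual Pc (y • lam + b) i := by
  have : (fun y : ℝ => zdual Pc (y • lam + b) i)
      = fun y : ℝ => ∑ j, ((Bmat n)ᵀ)⁻¹ i j * ((y * lam j + b j) - Pc (y • lam + b) j) := by
    funext y
    simp [zdual, Matrix.mulVec, dotProduct]
  rw [this]
  apply continuous_finset_sum
  intro j _
  exact continuous_const.mul (((continuous_id.mul continuous_const).add continuous_const).sub
    (projCoordCont hPc lam b j))

lemma BPcCoordCont (hPc : IsProjC Pc) (lam b : Fin n → ℝ) (i : Fin n) :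
    Continuous fun y : ℝ => (Bmat n).mulVec (Pc (y • lam + b)) i := by
  have : (fun y : ℝ => (Bmat n).mulVec (Pc (y • lam + b)) i)
      = fun y : ℝ => ∑ j, Bmat n i j * Pc (y • lam + b) j := by
    funext y
    simp [Matrix.mulVec, dotProduct]
  rw [this]
  apply continuous_finset_sum
  intro j _
  exact continuous_const.mul (projCoordCont hPc lam b j)

lemma psiCont (hPc : IsProjC Pc) (lam b : Fin n → ℝ) (τ : ℝ) :
    Continuous (psiFun Pc lam b τ) := by
  unfold psiFun
  apply Continuous.sub _ continuous_const
  apply continuous_finset_sum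
  intro j _
  exact (projCoordCont hPc lam b j).mul continuous_const

lemma psiSign (hPc : IsProjC Pc) (lam b : Fin n → ℝ) (τ : ℝ) (ystar : ℝ)
    (hmin : ∀ y : ℝ, phiFun Pc lam b τ ystar ≤ phiFun Pc lam b τ y) (y : ℝ) :
    0 ≤ (y - ystar) * psiFun Pc lam b τ y := by
  set ds : Fin n → ℝ := ystar • lam + b with hds
  set dy : Fin n → ℝ := y • lam + b with hdy
  set p : Fin n → ℝ := Pc ds with hp
  set q : Fin n → ℝ := Pc dy with hq
  have h1 : ∑ i, (p i - ds i)^2 ≤ ∑ i, (q i - ds i)^2 := by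
    have := (hPc ds).2 q (hPc dy).1
    linarith
  have h3 : ∑ i, p i * ds i = ∑ i, (p i)^2 := by
    have := projOrth hPc ds
    rw [← sub_eq_zero]
    rw [← Finset.sum_sub_distrib]
    rw [← this]
    exact Finset.sum_congr rfl fun i _ => by rw [hp]; ring
  have h2 : ∑ i, q i * dy i = ∑ i, (q i)^2 := by
    have := projOrth hPc dy
    rw [← sub_eq_zero, ← Finset.sum_sub_distrib, ← this]
    exact Finset.sum_congr rfl fun i _ => by rw [hq]; ring
  have e1 : ∑ i, (p i - ds i)^2
      = ∑ i, (p i)^2 - 2*(∑ i, p i * ds i) + ∑ i, (ds i)^2 := sum_sq_sub _ _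
  have e2 : ∑ i, (q i - ds i)^2
      = ∑ i, (q i)^2 - 2*(∑ i, q i * ds i) + ∑ i, (ds i)^2 := sum_sq_sub _ _
  have hlin : ∑ i, q i * dy i - ∑ i, q i * ds i = (y - ystar) * ∑ i, q i * lam i := by
    rw [← Finset.sum_sub_distrib, Finset.mul_sum]
    apply Finset.sum_congr rfl
    intro i _
    have : dy i - ds i = (y - ystar) * lam i := by
      rw [hdy, hds]; simp only [Pi.add_apply, Pi.smul_apply, smul_eq_mul]; ring
    linear_combination q i * this
  have hφ := hmin y
  unfold phiFun at hφ
  unfold psiFun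
  rw [← hdy]
  nlinarith [h1, h3, h2, e1, e2, hlin, hφ]

lemma psiStar (hPc : IsProjC Pc) (lam b : Fin n → ℝ) (τ : ℝ) (ystar : ℝ)
    (hmin : ∀ y : ℝ, phiFun Pc lam b τ ystar ≤ phiFun Pc lam b τ y) :
    psiFun Pc lam b τ ystar = 0 := by
  set ψ := psiFun Pc lam b τ with hψ
  have hc : Continuous ψ := psiCont hPc lam b τ
  rcases lt_trichotomy (ψ ystar) 0 with h | h | h
  · exfalso
    have hev : ∀ᶠ y in nhds ystar, ψ y < 0 :=
      (hc.continuousAt).eventually_lt_const h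
    obtain ⟨ε, hε, hball⟩ := Metric.eventually_nhds_iff.1 hev
    have hy := hball (show dist (ystar + ε/2) ystar < ε by
      rw [Real.dist_eq, show ystar + ε/2 - ystar = ε/2 by ring, abs_of_pos (by linarith)]; linarith)
    have := psiSign hPc lam b τ ystar hmin (ystar + ε/2)
    rw [← hψ] at this
    nlinarith
  · exact h
  · exfalso
    have hev : ∀ᶠ y in nhds ystar, 0 < ψ y :=
      (hc.continuousAt).eventually_const_lt h
    obtain ⟨ε, hε, hball⟩ := Metric.eventually_nhds_iff.1 hev
    have hy := hball (show dist (ystar - ε/2) ystar < ε by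
      rw [Real.dist_eq, show ystar - ε/2 - ystar = -(ε/2) by ring, abs_neg,
        abs_of_pos (by linarith)]; linarith)
    have := psiSign hPc lam b τ ystar hmin (ystar - ε/2)
    rw [← hψ] at this
    nlinarith

end Analytic2

/-- finite termination of the semismooth Newton step. If `y*` is the
unique minimizer of `φ`, then there is `ε > 0` such that for every `y` with
`|y − y*| < ε` and every `M ∈ M(y)`: `M > 0` and `y − ψ(y)/M = y*`. -/
theorem stmt18 {n : ℕ} (hn : 0 < n) (lam : Fin n → ℝ)
    (hmono : ∀ i j : Fin n, i ≤ j → lam j ≤ lam i)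
    (hnonneg : ∀ i, 0 ≤ lam i) (hlam : lam ≠ 0)
    (τ : ℝ) (hτ : 0 < τ) (b : Fin n → ℝ)
    (Pc : (Fin n → ℝ) → Fin n → ℝ) (hPc : IsProjC Pc)
    (ystar : ℝ)
    (hmin : ∀ y : ℝ, phiFun Pc lam b τ ystar ≤ phiFun Pc lam b τ y)
    (huniq : ∀ y' : ℝ, (∀ y : ℝ, phiFun Pc lam b τ y' ≤ phiFun Pc lam b τ y) → y' = ystar) :
    ∃ ε > (0:ℝ), ∀ y : ℝ, |y - ystar| < ε → ∀ M ∈ Mset Pc lam b y,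
      0 < M ∧ y - psiFun Pc lam b τ y / M = ystar := by
  have hψstar : psiFun Pc lam b τ ystar = 0 := psiStar hPc lam b τ ystar hmin
  set ds : Fin n → ℝ := ystar • lam + b with hds
  -- eventual stability of the support / active set
  have E1 : ∀ᶠ y in nhds ystar, ∀ i,
      zdual Pc ds i ≠ 0 → zdual Pc (y • lam + b) i ≠ 0 := by
    rw [Filter.eventually_all]
    intro i
    by_cases h : zdual Pc ds i ≠ 0
    · have hc := (zdualCoordCont hPc lam b i).continuousAt (x := ystar)
      have : zdual Pc (ystar • lam + b) i ≠ 0 := by rw [← hds]; exact h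
      exact (hc.eventually_ne this).mono fun y hy _ => hy
    · exact Filter.Eventually.of_forall fun y hy => absurd hy h
  have E2 : ∀ᶠ y in nhds ystar, ∀ i,
      (Bmat n).mulVec (Pc ds) i ≠ 0 → (Bmat n).mulVec (Pc (y • lam + b)) i ≠ 0 := by
    rw [Filter.eventually_all]
    intro i
    by_cases h : (Bmat n).mulVec (Pc ds) i ≠ 0
    · have hc := (BPcCoordCont hPc lam b i).continuousAt (x := ystar)
      have : (Bmat n).mulVec (Pc (ystar • lam + b)) i ≠ 0 := by rw [← hds]; exact h
      exact (hc.eventually_ne this).mono fun y hy _ => hy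
    · exact Filter.Eventually.of_forall fun y hy => absurd hy h
  have E3 : ∀ᶠ y in nhds ystar, |psiFun Pc lam b τ y| < τ := by
    have hc := (psiCont hPc lam b τ).continuousAt (x := ystar)
    have h1 : ∀ᶠ y in nhds ystar, psiFun Pc lam b τ y < τ :=
      hc.eventually_lt_const (by rw [hψstar]; exact hτ)
    have h2 : ∀ᶠ y in nhds ystar, -τ < psiFun Pc lam b τ y :=
      hc.eventually_const_lt (by rw [hψstar]; linarith)
    filter_upwards [h1, h2] with y hy1 hy2
    rw [abs_lt]; exact ⟨hy2, hy1⟩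
  obtain ⟨ε, hε, hball⟩ := Metric.eventually_nhds_iff.1 ((E1.and E2).and E3)
  refine ⟨ε, hε, ?_⟩
  intro y hy M hM
  obtain ⟨⟨h1, h2⟩, h3⟩ := hball (show dist y ystar < ε by rwa [Real.dist_eq])
  obtain ⟨H, ⟨Γ, hΓK, rfl⟩, rfl⟩ := hM
  have hΓKs : Γ ∈ Kset Pc ds := by
    constructor
    · intro i hi
      exact hΓK.1 i (h1 i hi)
    · intro i hiΓ
      by_contra hne
      exact (h2 i hne) (hΓK.2 i hiΓ)
  set Mv : ℝ := dotProduct lam ((Hmat Γ).mulVec lam) with hMv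
  have hMsq : Mv = ∑ i, ((Hmat Γ).mulVec lam i)^2 := Hmat_dot_self Γ lam
  have hM0 : 0 ≤ Mv := hMsq ▸ Finset.sum_nonneg fun i _ => sq_nonneg _
  have hMpos : 0 < Mv := by
    rcases lt_or_eq_of_le hM0 with h | h
    · exact h
    · exfalso
      have hHz : (Hmat Γ).mulVec lam = 0 := by
        funext i
        have := (Finset.sum_eq_zero_iff_of_nonneg
          (fun i _ => sq_nonneg ((Hmat Γ).mulVec lam i))).1 (by rw [← hMsq, ← h]) i
          (Finset.mem_univ i)
        exact pow_eq_zero_iff two_ne_zero |>.1 this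
      have hzero : ∑ i, Pc (y • lam + b) i * lam i = 0 :=
        Hmat_mulVec_zero_dot hHz hΓK.2
      have : psiFun Pc lam b τ y = -τ := by
        unfold psiFun
        rw [hzero]; ring
      rw [this, abs_neg, abs_of_pos hτ] at h3
      exact lt_irrefl _ h3
  have hPy : (Hmat Γ).mulVec (y • lam + b) = Pc (y • lam + b) := Hmat_mulVec_eq_proj hΓK
  have hPs : (Hmat Γ).mulVec ds = Pc ds := Hmat_mulVec_eq_proj hΓKs
  have hlinv : psiFun Pc lam b τ y = Mv * (y - ystar) := by
    have hdiff : (y • lam + b) - ds = (y - ystar) • lam := by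
      funext i
      rw [hds]
      simp only [Pi.sub_apply, Pi.add_apply, Pi.smul_apply, smul_eq_mul]
      ring
    have hmv : Pc (y • lam + b) - Pc ds = (y - ystar) • ((Hmat Γ).mulVec lam) := by
      rw [← hPy, ← hPs, ← Matrix.mulVec_sub, hdiff, Matrix.mulVec_smul]
    have hdot : ∑ i, Pc (y • lam + b) i * lam i - ∑ i, Pc ds i * lam i
        = (y - ystar) * Mv := by
      rw [← Finset.sum_sub_distrib]
      have : ∀ i, Pc (y • lam + b) i * lam i - Pc ds i * lam i
          = (y - ystar) * ((Hmat Γ).mulVec lam i * lam i) := by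
        intro i
        have := congrFun hmv i
        simp only [Pi.sub_apply, Pi.smul_apply, smul_eq_mul] at this
        linear_combination lam i * this
      rw [Finset.sum_congr rfl fun i _ => this i, ← Finset.mul_sum]
      congr 1
      rw [hMv, dotProduct]
      exact Finset.sum_congr rfl fun i _ => mul_comm _ _
    have hψy : psiFun Pc lam b τ y - psiFun Pc lam b τ ystar
        = (y - ystar) * Mv := by
      unfold psiFun
      rw [← hds]
      rw [show (∑ i, Pc (y • lam + b) i * lam i) - τ - ((∑ i, Pc ds i * lam i) - τ)
        = ∑ i, Pc (y • lam + b) i * lam i - ∑ i, Pc ds i * lam i by ring, hdot]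
    rw [hψstar, sub_zero] at hψy
    rw [hψy]; ring
  refine ⟨hMpos, ?_⟩
  rw [hlinv, mul_comm, mul_div_assoc, div_self (ne_of_gt hMpos), mul_one]
  ring
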